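/- Let d ≥ 1, λ ∈ (0,1), d_λ > 0, and Δx > 0. For each fixed α ∈ ℤ^d, the family (G_{α,β})_{β ∈ ℤ^d, β ≠ α} is summable, G_{α,α} = −∑_{β ≠ α} G_{α,β}, and 0 ≤ G_{α,α} ≤ Δx^d · μ_λ({z ∈ ℝ^d : |z| > Δx/2}). -/

import Mathlib

open MeasureTheory

/-- The Lévy-type measure `μ_λ` with density `d_λ |z|^(-(d+2λ))` w.r.t. Lebesgue measure. -/
noncomputable def fracMeasure (d : ℕ) (lam dl : ℝ) :
    Measure (EuclideanSpace ℝ (Fin d)) :=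
  volume.withDensity (fun z => ENNReal.ofReal (dl * ‖z‖ ^ (-((d : ℝ) + 2 * lam))))

/-- The spatial grid cell `R_α = αΔx + [-Δx/2, Δx/2)^d`. -/
def cell (d : ℕ) (dx : ℝ) (a : Fin d → ℤ) : Set (EuclideanSpace ℝ (Fin d)) :=
  {x | ∀ k : Fin d, (a k : ℝ) * dx - dx / 2 ≤ x k ∧ x k < (a k : ℝ) * dx + dx / 2}

lemma measurableSet_cell (d : ℕ) (dx : ℝ) (b : Fin d → ℤ) :
    MeasurableSet (cell d dx b) := by
  have : cell d dx b = ⋂ k : Fin d,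
      (fun x : EuclideanSpace ℝ (Fin d) => x k) ⁻¹'
        (Set.Ico ((b k : ℝ) * dx - dx / 2) ((b k : ℝ) * dx + dx / 2)) := by
    ext x; simp [cell, Set.mem_iInter, Set.mem_Ico]
  rw [this]
  exact MeasurableSet.iInter fun k =>
    ((EuclideanSpace.proj k).continuous.measurable) measurableSet_Ico

lemma cell_eq_preimage (d : ℕ) (dx : ℝ) (b : Fin d → ℤ) :
    cell d dx b = (MeasurableEquiv.toLp 2 (Fin d → ℝ)).symm ⁻¹'
      (Set.univ.pi fun k => Set.Ico ((b k : ℝ) * dx - dx / 2) ((b k : ℝ) * dx + dx / 2)) := by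
  ext x
  simp [cell, Set.mem_pi, Set.mem_Ico]

lemma volume_cell (d : ℕ) {dx : ℝ} (hdx : 0 < dx) (b : Fin d → ℤ) :
    volume (cell d dx b) = ENNReal.ofReal (dx ^ d) := by
  rw [cell_eq_preimage,
    (EuclideanSpace.volume_preserving_symm_measurableEquiv_toLp (Fin d)).measure_preimage
      ((MeasurableSet.univ_pi fun k => measurableSet_Ico).nullMeasurableSet)]
  rw [volume_pi_pi]
  simp only [Real.volume_Ico]
  have : ∀ k : Fin d, (b k : ℝ) * dx + dx / 2 - ((b k : ℝ) * dx - dx / 2) = dx := by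
    intro k; ring
  simp only [this, Finset.prod_const, Finset.card_univ, Fintype.card_fin]
  rw [ENNReal.ofReal_pow hdx.le]

lemma cell_exists (d : ℕ) {dx : ℝ} (hdx : 0 < dx) (y : EuclideanSpace ℝ (Fin d)) :
    ∃ b, y ∈ cell d dx b := by
  refine ⟨fun k => ⌊y k / dx + 1/2⌋, fun k => ?_⟩
  have h1 := Int.floor_le (y k / dx + 1/2)
  have h2 := Int.lt_floor_add_one (y k / dx + 1/2)
  constructor
  · have : ((⌊y k / dx + 1/2⌋ : ℝ) - 1/2) * dx ≤ (y k / dx) * dx := by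
      apply mul_le_mul_of_nonneg_right _ hdx.le
      linarith
    rw [div_mul_cancel₀ _ hdx.ne'] at this
    linarith [this]
  · have : (y k / dx) * dx < ((⌊y k / dx + 1/2⌋ : ℝ) + 1/2) * dx := by
      apply mul_lt_mul_of_pos_right _ hdx
      linarith
    rw [div_mul_cancel₀ _ hdx.ne'] at this
    linarith [this]

lemma cell_unique (d : ℕ) {dx : ℝ} (hdx : 0 < dx) {b b' : Fin d → ℤ}
    {y : EuclideanSpace ℝ (Fin d)} (h : y ∈ cell d dx b) (h' : y ∈ cell d dx b') :
    b = b' := by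
  funext k
  by_contra hne
  rcases lt_or_gt_of_ne hne with hlt | hlt
  · have : (b k : ℝ) + 1 ≤ b' k := by exact_mod_cast hlt
    have := (h k).2
    have := (h' k).1
    nlinarith
  · have : (b' k : ℝ) + 1 ≤ b k := by exact_mod_cast hlt
    have := (h' k).2
    have := (h k).1
    nlinarith

lemma fracMeasure_lt_top (d : ℕ) (hd : 1 ≤ d) {lam dl dx : ℝ}
    (hlam : lam ∈ Set.Ioo (0 : ℝ) 1) (hdl : 0 < dl) (hdx : 0 < dx) :
    fracMeasure d lam dl {z | dx / 2 < ‖z‖} < ⊤ := by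
  set r : ℝ := dx / 2 with hr
  have hr0 : 0 < r := by positivity
  set s : ℝ := (d : ℝ) + 2 * lam with hs
  have hds : (Module.finrank ℝ (EuclideanSpace ℝ (Fin d)) : ℝ) < s := by
    rw [finrank_euclideanSpace_fin, hs]
    have := hlam.1
    linarith
  -- the density is integrable on the region
  have hint : IntegrableOn (fun z : EuclideanSpace ℝ (Fin d) => dl * ‖z‖ ^ (-s))
      {z | r < ‖z‖} volume := by
    have hbase : Integrable (fun z : EuclideanSpace ℝ (Fin d) => (1 + ‖z‖) ^ (-s)) volume :=
      integrable_one_add_norm hds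
    have hbase' : IntegrableOn
        (fun z : EuclideanSpace ℝ (Fin d) => dl * (1 + r⁻¹) ^ s * (1 + ‖z‖) ^ (-s))
        {z | r < ‖z‖} volume :=
      ((hbase.const_mul _).integrableOn)
    refine hbase'.mono' ?_ ?_
    · exact Measurable.aestronglyMeasurable (by fun_prop)
    · filter_upwards [ae_restrict_mem (by
        exact measurableSet_lt measurable_const measurable_norm)] with z hz
      have hz0 : 0 < ‖z‖ := lt_trans hr0 hz
      rw [Real.norm_eq_abs, abs_of_nonneg (by positivity)]
      rw [mul_assoc]
      apply mul_le_mul_of_nonneg_left _ hdl.le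
      -- ‖z‖ ^ (-s) ≤ (1+r⁻¹)^s * (1+‖z‖)^(-s)
      have key : 1 + ‖z‖ ≤ (1 + r⁻¹) * ‖z‖ := by
        have : r⁻¹ * r ≤ r⁻¹ * ‖z‖ := by
          apply mul_le_mul_of_nonneg_left hz.le (by positivity)
        rw [inv_mul_cancel₀ hr0.ne'] at this
        nlinarith
      have h1 : (1 + ‖z‖) ^ s ≤ ((1 + r⁻¹) * ‖z‖) ^ s := by
        have hs0 : (0:ℝ) ≤ s := by
          rw [hs]; have := hlam.1; have h0 : (0:ℝ) ≤ (d:ℝ) := Nat.cast_nonneg d; linarith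
        exact Real.rpow_le_rpow (by positivity) key hs0
      rw [Real.mul_rpow (by positivity) hz0.le] at h1
      have hA : (0:ℝ) < ‖z‖ ^ s := Real.rpow_pos_of_pos hz0 s
      have hB : (0:ℝ) < (1 + ‖z‖) ^ s := Real.rpow_pos_of_pos (by positivity) s
      have hC : (0:ℝ) < (1 + r⁻¹) ^ s := Real.rpow_pos_of_pos (by positivity) s
      rw [Real.rpow_neg hz0.le,
        Real.rpow_neg (show (0:ℝ) ≤ 1 + ‖z‖ by positivity)]
      have h2 : ((1 + r⁻¹) ^ s * ‖z‖ ^ s)⁻¹ ≤ ((1 + ‖z‖) ^ s)⁻¹ :=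
        inv_anti₀ hB h1
      have h3 : (‖z‖ ^ s)⁻¹ = (1 + r⁻¹) ^ s * ((1 + r⁻¹) ^ s * ‖z‖ ^ s)⁻¹ := by
        rw [mul_inv, ← mul_assoc, mul_inv_cancel₀ hC.ne', one_mul]
      rw [h3]
      exact mul_le_mul_of_nonneg_left h2 hC.le
  have hmeas : MeasurableSet {z : EuclideanSpace ℝ (Fin d) | r < ‖z‖} :=
    measurableSet_lt measurable_const measurable_norm
  rw [fracMeasure, withDensity_apply _ hmeas]
  have := hint.2
  rw [HasFiniteIntegral] at this
  refine lt_of_le_of_lt (lintegral_mono fun z => ?_) this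
  rw [← ofReal_norm]
  exact ENNReal.ofReal_le_ofReal (le_abs_self _)

/-- The finite-volume weight
`G_{α,β} = ∫_{R_α} ∫_{|z| > Δx/2} (1_{R_β}(x) - 1_{R_β}(x+z)) dμ_λ(z) dx`. -/
noncomputable def weight (d : ℕ) (lam dl dx : ℝ) (a b : Fin d → ℤ) : ℝ :=
  ∫ x in cell d dx a,
    ∫ z in {z : EuclideanSpace ℝ (Fin d) | dx / 2 < ‖z‖},
      ((cell d dx b).indicator (fun _ => (1 : ℝ)) x
        - (cell d dx b).indicator (fun _ => (1 : ℝ)) (x + z)) ∂(fracMeasure d lam dl)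
theorem stmt1 (d : ℕ) (hd : 1 ≤ d) (lam dl dx : ℝ)
    (hlam : lam ∈ Set.Ioo (0 : ℝ) 1) (hdl : 0 < dl) (hdx : 0 < dx) (a : Fin d → ℤ) :
    Summable (fun b : {b : Fin d → ℤ // b ≠ a} => weight d lam dl dx a b) ∧
    weight d lam dl dx a a
      = - ∑' b : {b : Fin d → ℤ // b ≠ a}, weight d lam dl dx a b ∧
    0 ≤ weight d lam dl dx a a ∧
    weight d lam dl dx a a
      ≤ dx ^ d * (fracMeasure d lam dl {z | dx / 2 < ‖z‖}).toReal := by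
  classical
  set S : Set (EuclideanSpace ℝ (Fin d)) := {z | dx / 2 < ‖z‖} with hS
  set μ : Measure (EuclideanSpace ℝ (Fin d)) := (fracMeasure d lam dl).restrict S with hμ
  have hμuniv : μ Set.univ = fracMeasure d lam dl S := by
    rw [hμ, Measure.restrict_apply_univ]
  have hμtop : μ Set.univ < ⊤ := by
    rw [hμuniv]; exact fracMeasure_lt_top d hd hlam hdl hdx
  haveI hμfin : IsFiniteMeasure μ := ⟨hμtop⟩
  set M : ℝ := (μ Set.univ).toReal with hM
  -- translated cells
  set A : (Fin d → ℤ) → EuclideanSpace ℝ (Fin d) → Set (EuclideanSpace ℝ (Fin d)) :=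
    fun b x => (fun z => x + z) ⁻¹' cell d dx b with hA_def
  have hAmeas : ∀ b x, MeasurableSet (A b x) := fun b x =>
    (measurableSet_cell d dx b).preimage (measurable_const_add x)
  have hAmeasμ : ∀ b, Measurable fun x => μ (A b x) := by
    intro b
    have hset : MeasurableSet {p : EuclideanSpace ℝ (Fin d) × EuclideanSpace ℝ (Fin d) |
        p.1 + p.2 ∈ cell d dx b} :=
      (continuous_fst.add continuous_snd).measurable (measurableSet_cell d dx b)
    exact measurable_measure_prodMk_left hset
  -- the inner integral
  have inner_eq : ∀ b x,
      (∫ z in S, ((cell d dx b).indicator (fun _ => (1 : ℝ)) x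
        - (cell d dx b).indicator (fun _ => (1 : ℝ)) (x + z)) ∂(fracMeasure d lam dl))
      = (cell d dx b).indicator (fun _ => (1 : ℝ)) x * M - (μ (A b x)).toReal := by
    intro b x
    have hg : ∀ z, (cell d dx b).indicator (fun _ => (1 : ℝ)) (x + z)
        = (A b x).indicator (fun _ => (1 : ℝ)) z := by
      intro z
      by_cases h : x + z ∈ cell d dx b
      · rw [Set.indicator_of_mem h, Set.indicator_of_mem (by exact h)]
      · rw [Set.indicator_of_notMem h, Set.indicator_of_notMem (by exact h)]
    simp_rw [hg]
    rw [integral_sub (integrable_const _) ((integrable_const (1 : ℝ)).indicator (hAmeas b x))]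
    rw [integral_const, integral_indicator_const (1 : ℝ) (hAmeas b x)]
    rw [smul_eq_mul, smul_eq_mul, mul_one, mul_comm]
    rfl
  -- the weights
  have hw_eq : ∀ b, weight d lam dl dx a b
      = ∫ x in cell d dx a,
          ((cell d dx b).indicator (fun _ => (1 : ℝ)) x * M - (μ (A b x)).toReal) := by
    intro b
    unfold weight
    exact integral_congr_ae (Filter.Eventually.of_forall (inner_eq b))
  set L : (Fin d → ℤ) → ENNReal := fun b => ∫⁻ x in cell d dx a, μ (A b x) with hL_def
  set V : ENNReal := ENNReal.ofReal (dx ^ d) with hV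
  have hVfin : V ≠ ⊤ := ENNReal.ofReal_ne_top
  have hVM_fin : V * μ Set.univ ≠ ⊤ := ENNReal.mul_ne_top hVfin hμtop.ne
  have hL_le : ∀ b, L b ≤ V * μ Set.univ := by
    intro b
    calc L b ≤ ∫⁻ _ in cell d dx a, μ Set.univ ∂volume :=
          lintegral_mono fun x => measure_mono (Set.subset_univ _)
      _ = μ Set.univ * volume (cell d dx a) := setLIntegral_const _ _
      _ = V * μ Set.univ := by rw [volume_cell d hdx, mul_comm, hV]
  have hLfin : ∀ b, L b ≠ ⊤ := fun b => (lt_of_le_of_lt (hL_le b) hVM_fin.lt_top).ne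
  -- the values of the integrals of the toReal part
  have hIm : ∀ b, (∫ x in cell d dx a, (μ (A b x)).toReal) = (L b).toReal := by
    intro b
    exact integral_toReal ((hAmeasμ b).aemeasurable)
      (Filter.Eventually.of_forall fun x =>
        lt_of_le_of_lt (measure_mono (Set.subset_univ _)) hμtop)
  have hIm_int : ∀ b, IntegrableOn (fun x => (μ (A b x)).toReal) (cell d dx a) volume :=
    fun b => integrable_toReal_of_lintegral_ne_top ((hAmeasμ b).aemeasurable) (hLfin b)
  -- off-diagonal weights
  have hwb : ∀ b : Fin d → ℤ, b ≠ a → weight d lam dl dx a b = -(L b).toReal := by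
    intro b hb
    rw [hw_eq b]
    rw [setIntegral_congr_fun (measurableSet_cell d dx a)
      (show Set.EqOn _ (fun x => -(μ (A b x)).toReal) (cell d dx a) from fun x hx => by
        have hxb : x ∉ cell d dx b := fun hxb => hb (cell_unique d hdx hxb hx)
        simp [Set.indicator_of_notMem hxb])]
    rw [integral_neg, hIm b]
  -- diagonal weight
  have hwa : weight d lam dl dx a a = dx ^ d * M - (L a).toReal := by
    rw [hw_eq a]
    rw [setIntegral_congr_fun (measurableSet_cell d dx a)
      (show Set.EqOn _ (fun x => M - (μ (A a x)).toReal) (cell d dx a) from fun x hx => by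
        simp [Set.indicator_of_mem hx])]
    rw [integral_sub (integrableOn_const (C := M) (μ := volume) (s := cell d dx a) (by
          rw [volume_cell d hdx]; exact ENNReal.ofReal_ne_top)) (hIm_int a)]
    rw [setIntegral_const, hIm a, measureReal_def, volume_cell d hdx,
      ENNReal.toReal_ofReal (by positivity), smul_eq_mul]
  -- sum over all cells
  have hsum : ∑' b, L b = V * μ Set.univ := by
    rw [hL_def]
    rw [← lintegral_tsum fun b => (hAmeasμ b).aemeasurable]
    have hx_eq : ∀ x : EuclideanSpace ℝ (Fin d), ∑' b, μ (A b x) = μ Set.univ := by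
      intro x
      have hdisj : Pairwise (Function.onFun Disjoint fun b => A b x) := by
        intro b b' hne
        refine Set.disjoint_left.mpr fun z hz hz' => hne ?_
        exact cell_unique d hdx hz hz'
      rw [← measure_iUnion hdisj fun b => hAmeas b x]
      congr 1
      rw [Set.eq_univ_iff_forall]
      intro z
      obtain ⟨b, hb⟩ := cell_exists d hdx (x + z)
      exact Set.mem_iUnion.mpr ⟨b, hb⟩
    simp_rw [hx_eq]
    rw [setLIntegral_const, volume_cell d hdx, mul_comm]
  -- split off the diagonal term
  have hsplit : (∑' x : ({a} : Set (Fin d → ℤ)), L x)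
      + ∑' x : ↥({a}ᶜ : Set (Fin d → ℤ)), L x = ∑' b, L b :=
    Summable.tsum_add_tsum_compl ENNReal.summable ENNReal.summable
  rw [tsum_singleton a L] at hsplit
  have hsub_eq : (∑' b : {b : Fin d → ℤ // b ≠ a}, L b)
      = ∑' x : ↥({a}ᶜ : Set (Fin d → ℤ)), L x := rfl
  have hT : (∑' b : {b : Fin d → ℤ // b ≠ a}, L b) = V * μ Set.univ - L a := by
    rw [hsub_eq]
    refine ENNReal.eq_sub_of_add_eq (hLfin a) ?_
    rw [add_comm, hsplit, hsum]
  have hT_fin : (∑' b : {b : Fin d → ℤ // b ≠ a}, L b) ≠ ⊤ := by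
    rw [hT]
    exact (lt_of_le_of_lt (le_trans tsub_le_self le_rfl) hVM_fin.lt_top).ne
  -- the weights on the subtype
  have hweq : (fun b : {b : Fin d → ℤ // b ≠ a} => weight d lam dl dx a b)
      = fun b : {b : Fin d → ℤ // b ≠ a} => -((L b.1).toReal) :=
    funext fun b => hwb b.1 b.2
  have hsummable : Summable (fun b : {b : Fin d → ℤ // b ≠ a} => weight d lam dl dx a b) := by
    rw [hweq]
    exact (ENNReal.summable_toReal hT_fin).neg
  have htsum : (∑' b : {b : Fin d → ℤ // b ≠ a}, weight d lam dl dx a b)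
      = -(dx ^ d * M - (L a).toReal) := by
    rw [hweq, tsum_neg,
      ← ENNReal.tsum_toReal_eq (fun b : {b : Fin d → ℤ // b ≠ a} => hLfin b), hT,
      ENNReal.toReal_sub_of_le (hL_le a) hVM_fin, ENNReal.toReal_mul, hV,
      ENNReal.toReal_ofReal (by positivity)]
  have hLa_toReal_le : (L a).toReal ≤ dx ^ d * M := by
    have := ENNReal.toReal_mono hVM_fin (hL_le a)
    rwa [ENNReal.toReal_mul, hV, ENNReal.toReal_ofReal (by positivity)] at this
  refine ⟨hsummable, ?_, ?_, ?_⟩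
  · rw [hwa, htsum, neg_neg]
  · rw [hwa]; linarith
  · rw [hwa, ← hμuniv, ← hM]
    have : 0 ≤ (L a).toReal := ENNReal.toReal_nonneg
    linarith
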